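/- For every real λ ≥ 1, the integral ∫₀^∞ r⁷ / ((1 + λ² r²)² (1 + r²)⁶) dr is at most 3/(8 λ⁴). -/

import Mathlib

open MeasureTheory

lemma aux_deriv (r : ℝ) :
    HasDerivAt (fun x : ℝ => -(1/8)/(1+x^2)^4 + (1/10)/(1+x^2)^5)
      (r^3/(1+r^2)^6) r := by
  have hpos : (0:ℝ) < 1 + r^2 := by positivity
  have hu : HasDerivAt (fun x : ℝ => 1 + x^2) (2*r) r := by
    simpa using ((hasDerivAt_pow 2 r).const_add 1)
  have h4 : HasDerivAt (fun x : ℝ => (1+x^2)^4) (4*(1+r^2)^3*(2*r)) r := by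
    simpa [Pi.pow_def] using hu.pow 4
  have h5 : HasDerivAt (fun x : ℝ => (1+x^2)^5) (5*(1+r^2)^4*(2*r)) r := by
    simpa [Pi.pow_def] using hu.pow 5
  have hne4 : ((1:ℝ)+r^2)^4 ≠ 0 := by positivity
  have hne5 : ((1:ℝ)+r^2)^5 ≠ 0 := by positivity
  have d1 := (hasDerivAt_const r (-(1/8):ℝ)).div h4 hne4
  have d2 := (hasDerivAt_const r ((1/10):ℝ)).div h5 hne5
  have := d1.add d2
  refine this.congr_deriv ?_
  field_simp
  ring

lemma aux_int :
    ∫ r in Set.Ioi (0:ℝ), r^3/(1+r^2)^6 = 1/40 ∧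
    IntegrableOn (fun r : ℝ => r^3/(1+r^2)^6) (Set.Ioi (0:ℝ)) := by
  have hderiv : ∀ x ∈ Set.Ioi (0:ℝ),
      HasDerivAt (fun x : ℝ => -(1/8)/(1+x^2)^4 + (1/10)/(1+x^2)^5)
        (x^3/(1+x^2)^6) x := fun x _ => aux_deriv x
  have hnonneg : ∀ x ∈ Set.Ioi (0:ℝ), 0 ≤ x^3/(1+x^2)^6 := by
    intro x hx
    have : (0:ℝ) < x := hx
    positivity
  have hcont : ContinuousWithinAt
      (fun x : ℝ => -(1/8)/(1+x^2)^4 + (1/10)/(1+x^2)^5) (Set.Ici 0) 0 :=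
    (aux_deriv 0).continuousAt.continuousWithinAt
  have htend : Filter.Tendsto (fun x : ℝ => -(1/8)/(1+x^2)^4 + (1/10)/(1+x^2)^5)
      Filter.atTop (nhds 0) := by
    have hb : Filter.Tendsto (fun x : ℝ => 1 + x^2) Filter.atTop Filter.atTop := by
      exact Filter.tendsto_atTop_add_const_left _ 1 (Filter.tendsto_pow_atTop (by norm_num))
    have t1 : Filter.Tendsto (fun x : ℝ => -(1/8)/(1+x^2)^4) Filter.atTop (nhds 0) :=
      Filter.Tendsto.div_atTop tendsto_const_nhds ((Filter.tendsto_pow_atTop (by norm_num)).comp hb)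
    have t2 : Filter.Tendsto (fun x : ℝ => (1/10)/(1+x^2)^5) Filter.atTop (nhds 0) :=
      Filter.Tendsto.div_atTop tendsto_const_nhds ((Filter.tendsto_pow_atTop (by norm_num)).comp hb)
    simpa using t1.add t2
  constructor
  · have := integral_Ioi_of_hasDerivAt_of_nonneg hcont hderiv hnonneg htend
    rw [this]; norm_num
  · exact integrableOn_Ioi_deriv_of_nonneg hcont hderiv hnonneg htend

theorem radial_integral_bound (l : ℝ) (hl : 1 ≤ l) :
    ∫ r in Set.Ioi (0 : ℝ), r ^ 7 / ((1 + l ^ 2 * r ^ 2) ^ 2 * (1 + r ^ 2) ^ 6) ≤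
      3 / (8 * l ^ 4) := by
  obtain ⟨hval, hint⟩ := aux_int
  have hl0 : (0:ℝ) < l := lt_of_lt_of_le one_pos hl
  have hl4 : (0:ℝ) < l^4 := by positivity
  set G : ℝ → ℝ := fun r => (l^4)⁻¹ * (r^3/(1+r^2)^6) with hG
  have hGint : IntegrableOn G (Set.Ioi (0:ℝ)) := hint.const_mul _
  have hbound : ∀ r ∈ Set.Ioi (0:ℝ),
      r ^ 7 / ((1 + l ^ 2 * r ^ 2) ^ 2 * (1 + r ^ 2) ^ 6) ≤ G r := by
    intro r hr
    have hr0 : (0:ℝ) < r := hr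
    have hd1 : (0:ℝ) < (1 + l^2*r^2)^2 := by positivity
    have hd2 : (0:ℝ) < (1 + r^2)^6 := by positivity
    rw [hG]
    rw [div_le_iff₀ (by positivity)]
    have h1 : l^4 * r^4 ≤ (1 + l^2*r^2)^2 := by nlinarith [sq_nonneg (l*r), sq_nonneg (l^2*r^2)]
    have hRHS : (l^4)⁻¹ * (r^3/(1+r^2)^6) * ((1 + l^2*r^2)^2 * (1+r^2)^6)
        = r^3 * (1 + l^2*r^2)^2 / l^4 := by field_simp
    rw [hRHS, le_div_iff₀ hl4]
    nlinarith [h1, pow_pos hr0 3]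
  have hfint : IntegrableOn
      (fun r : ℝ => r ^ 7 / ((1 + l ^ 2 * r ^ 2) ^ 2 * (1 + r ^ 2) ^ 6)) (Set.Ioi (0:ℝ)) := by
    apply hGint.mono' ?_ ?_
    · apply Continuous.aestronglyMeasurable
      apply Continuous.div (by continuity)
      · continuity
      · intro x; positivity
    · filter_upwards [ae_restrict_mem measurableSet_Ioi] with r hr
      have hr0 : (0:ℝ) < r := hr
      rw [Real.norm_eq_abs, abs_of_nonneg (by positivity)]
      exact hbound r hr
  have hmono : ∫ r in Set.Ioi (0:ℝ), r ^ 7 / ((1 + l ^ 2 * r ^ 2) ^ 2 * (1 + r ^ 2) ^ 6)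
      ≤ ∫ r in Set.Ioi (0:ℝ), G r :=
    setIntegral_mono_on hfint hGint measurableSet_Ioi hbound
  have hGval : ∫ r in Set.Ioi (0:ℝ), G r = (l^4)⁻¹ * (1/40) := by
    rw [hG]
    rw [integral_const_mul, hval]
  refine hmono.trans ?_
  rw [hGval, show (l^4)⁻¹ * (1/40) = 1/(40*l^4) by field_simp,
    div_le_div_iff₀ (by positivity) (by positivity)]
  nlinarith [hl4]
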